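/- For monotone f : [0,1] → [0,1], the identities (f∨)∧ = f∧ and (f∧)∨ = f∨ hold, where f∨(x) = ⨆_{y<x} f(y) and f∧(x) = ⨅_{x<y} f(y). Consequently, f ↦ f∧ and g ↦ g∨ are mutually inverse order isomorphisms between the poset of join-continuous functions [0,1]→[0,1] and the poset of meet-continuous functions [0,1]→[0,1]. -/

import Mathlib

open unitInterval

instance : Fact ((0:ℝ) ≤ 1) := ⟨zero_le_one⟩

/-- A self-map of `[0,1]` is join-continuous if it preserves all suprema. -/
def JoinCont (f : unitInterval → unitInterval) : Prop :=
  ∀ X : Set unitInterval, f (sSup X) = sSup (f '' X)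

/-- A self-map of `[0,1]` is meet-continuous if it preserves all infima. -/
def MeetCont (f : unitInterval → unitInterval) : Prop :=
  ∀ X : Set unitInterval, f (sInf X) = sInf (f '' X)

/-- `f∨(x) := ⨆_{y < x} f(y)`. -/
noncomputable def jOf (f : unitInterval → unitInterval) (x : unitInterval) :
    unitInterval := sSup (f '' {y | y < x})

/-- `f∧(x) := ⨅_{x < y} f(y)`. -/
noncomputable def mOf (f : unitInterval → unitInterval) (x : unitInterval) :
    unitInterval := sInf (f '' {y | x < y})

lemma aux_sSup_lt (x : unitInterval) : sSup {y : unitInterval | y < x} = x := by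
  apply le_antisymm (sSup_le fun b hb => hb.le)
  apply le_of_forall_lt
  intro c hc
  obtain ⟨d, hcd, hdx⟩ := exists_between hc
  exact lt_of_lt_of_le hcd (le_sSup hdx)

lemma aux_sInf_gt (x : unitInterval) : sInf {y : unitInterval | x < y} = x := by
  apply le_antisymm _ (le_sInf fun b hb => hb.le)
  apply le_of_forall_gt
  intro c hc
  obtain ⟨d, hxd, hdc⟩ := exists_between hc
  exact lt_of_le_of_lt (sInf_le hxd) hdc

lemma jOf_mono (f : unitInterval → unitInterval) : Monotone (jOf f) := fun x y hxy =>
  sSup_le_sSup (Set.image_mono fun z hz => lt_of_lt_of_le hz hxy)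

lemma mOf_mono (f : unitInterval → unitInterval) : Monotone (mOf f) := fun x y hxy =>
  sInf_le_sInf (Set.image_mono fun z hz => lt_of_le_of_lt hxy hz)

lemma jOf_le (f : unitInterval → unitInterval) (hf : Monotone f) : jOf f ≤ f := fun x =>
  sSup_le (by rintro _ ⟨z, hz, rfl⟩; exact hf hz.le)

lemma le_mOf (f : unitInterval → unitInterval) (hf : Monotone f) : f ≤ mOf f := fun x =>
  le_sInf (by rintro _ ⟨z, hz, rfl⟩; exact hf hz.le)

lemma mOf_jOf (f : unitInterval → unitInterval) (hf : Monotone f) :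
    mOf (jOf f) = mOf f := by
  funext x
  apply le_antisymm
  · exact le_sInf (by
      rintro _ ⟨y, hy, rfl⟩
      exact le_trans (sInf_le ⟨y, hy, rfl⟩) (jOf_le f hf y))
  · apply le_sInf
    rintro _ ⟨y, hy, rfl⟩
    obtain ⟨z, hxz, hzy⟩ := exists_between (show x < y from hy)
    exact le_trans (sInf_le ⟨z, hxz, rfl⟩) (le_sSup ⟨z, hzy, rfl⟩)

lemma jOf_mOf (f : unitInterval → unitInterval) (hf : Monotone f) :
    jOf (mOf f) = jOf f := by
  funext x
  apply le_antisymm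
  · apply sSup_le
    rintro _ ⟨y, hy, rfl⟩
    obtain ⟨z, hyz, hzx⟩ := exists_between (show y < x from hy)
    exact le_trans (sInf_le ⟨z, hyz, rfl⟩) (le_sSup ⟨z, hzx, rfl⟩)
  · exact sSup_le (by
      rintro _ ⟨y, hy, rfl⟩
      exact le_trans (le_mOf f hf y) (le_sSup ⟨y, hy, rfl⟩))

lemma meetCont_mOf (f : unitInterval → unitInterval) : MeetCont (mOf f) := by
  intro X
  apply le_antisymm
  · exact le_sInf (by rintro _ ⟨y, hy, rfl⟩; exact mOf_mono f (sInf_le hy))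
  · apply le_sInf
    rintro _ ⟨y, hy, rfl⟩
    obtain ⟨x, hxX, hxy⟩ : ∃ x ∈ X, x < y := by
      by_contra h
      push_neg at h
      exact absurd (le_sInf h) (not_le.2 hy)
    exact le_trans (sInf_le ⟨x, hxX, rfl⟩) (sInf_le ⟨y, hxy, rfl⟩)

lemma joinCont_jOf (f : unitInterval → unitInterval) : JoinCont (jOf f) := by
  intro X
  apply le_antisymm
  · apply sSup_le
    rintro _ ⟨y, hy, rfl⟩
    obtain ⟨x, hxX, hyx⟩ : ∃ x ∈ X, y < x := by
      by_contra h
      push_neg at h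
      exact absurd (sSup_le h) (not_le.2 hy)
    have h1 : f y ≤ jOf f x := le_sSup ⟨y, hyx, rfl⟩
    exact le_trans h1 (le_sSup ⟨x, hxX, rfl⟩)
  · exact sSup_le (by rintro _ ⟨y, hy, rfl⟩; exact jOf_mono f (le_sSup hy))

lemma joinCont_mono {f : unitInterval → unitInterval} (hf : JoinCont f) : Monotone f := by
  intro x y hxy
  have h := hf {x, y}
  rw [Set.image_pair] at h
  rw [sSup_pair, sup_eq_right.2 hxy] at h
  rw [h, sSup_pair]
  exact le_sup_left

lemma meetCont_mono {f : unitInterval → unitInterval} (hf : MeetCont f) : Monotone f := by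
  intro x y hxy
  have h := hf {x, y}
  rw [Set.image_pair] at h
  rw [sInf_pair, inf_eq_left.2 hxy] at h
  rw [h, sInf_pair]
  exact inf_le_right

lemma jOf_eq_of_joinCont {f : unitInterval → unitInterval} (hf : JoinCont f) :
    jOf f = f := by
  funext x
  rw [jOf, ← hf {y | y < x}, aux_sSup_lt]

lemma mOf_eq_of_meetCont {f : unitInterval → unitInterval} (hf : MeetCont f) :
    mOf f = f := by
  funext x
  rw [mOf, ← hf {y | x < y}, aux_sInf_gt]

lemma jOf_le_jOf {f g : unitInterval → unitInterval} (h : f ≤ g) : jOf f ≤ jOf g := by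
  intro x
  apply sSup_le
  rintro _ ⟨y, hy, rfl⟩
  exact le_trans (h y) (le_sSup ⟨y, hy, rfl⟩)

lemma mOf_le_mOf {f g : unitInterval → unitInterval} (h : f ≤ g) : mOf f ≤ mOf g := by
  intro x
  apply le_sInf
  rintro _ ⟨y, hy, rfl⟩
  exact le_trans (sInf_le ⟨y, hy, rfl⟩) (h y)

/-- For monotone `f : [0,1] → [0,1]`, `(f∨)∧ = f∧` and `(f∧)∨ = f∨`.
Consequently, `f ↦ f∧` and `g ↦ g∨` are mutually inverse order isomorphisms
between the (pointwise ordered) posets of join-continuous and of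
meet-continuous self-maps of `[0,1]`. -/
theorem stmt_6 :
    (∀ f : unitInterval → unitInterval, Monotone f →
        mOf (jOf f) = mOf f ∧ jOf (mOf f) = jOf f) ∧
    (∀ f, JoinCont f → MeetCont (mOf f)) ∧
    (∀ g, MeetCont g → JoinCont (jOf g)) ∧
    (∀ f, JoinCont f → jOf (mOf f) = f) ∧
    (∀ g, MeetCont g → mOf (jOf g) = g) ∧
    (∀ f₁ f₂, JoinCont f₁ → JoinCont f₂ → (f₁ ≤ f₂ ↔ mOf f₁ ≤ mOf f₂)) ∧
    (∀ g₁ g₂, MeetCont g₁ → MeetCont g₂ → (g₁ ≤ g₂ ↔ jOf g₁ ≤ jOf g₂)) := by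
  refine ⟨fun f hf => ⟨mOf_jOf f hf, jOf_mOf f hf⟩,
    fun f _ => meetCont_mOf f, fun g _ => joinCont_jOf g, ?_, ?_, ?_, ?_⟩
  · intro f hf
    rw [jOf_mOf f (joinCont_mono hf), jOf_eq_of_joinCont hf]
  · intro g hg
    rw [mOf_jOf g (meetCont_mono hg), mOf_eq_of_meetCont hg]
  · intro f₁ f₂ h₁ h₂
    refine ⟨mOf_le_mOf, fun h => ?_⟩
    have := jOf_le_jOf h
    rwa [jOf_mOf f₁ (joinCont_mono h₁), jOf_mOf f₂ (joinCont_mono h₂),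
      jOf_eq_of_joinCont h₁, jOf_eq_of_joinCont h₂] at this
  · intro g₁ g₂ h₁ h₂
    refine ⟨jOf_le_jOf, fun h => ?_⟩
    have := mOf_le_mOf h
    rwa [mOf_jOf g₁ (meetCont_mono h₁), mOf_jOf g₂ (meetCont_mono h₂),
      mOf_eq_of_meetCont h₁, mOf_eq_of_meetCont h₂] at this
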